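/- arXiv:2011.13559 — 2 statements merged into one kernel-verified Lean document; each statement's English description precedes it below -/
import Mathlib

section
/- For x > y > 0: 2/3 - (coth x - coth y)/(x-y) - (16/243)(x² + xy + y²) ≤ (1/(x-y))∫_y^x (coth t)/t dt ≤ 2/3 - (coth x - coth y)/(x-y). -/
open Real

private lemma nonneg_of_deriv (f f' : ℝ → ℝ) (hd : ∀ u, HasDerivAt f (f' u) u)
    (h0 : f 0 = 0) (hf' : ∀ u, 0 ≤ u → 0 ≤ f' u) : ∀ u, 0 ≤ u → 0 ≤ f u := by
  intro u hu
  have mono : MonotoneOn f (Set.Ici 0) := by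
    apply monotoneOn_of_deriv_nonneg (convex_Ici 0)
      (fun z _ => (hd z).continuousAt.continuousWithinAt)
      (fun z _ => (hd z).differentiableAt.differentiableWithinAt)
    intro z hz
    rw [interior_Ici] at hz
    rw [(hd z).deriv]
    exact hf' z hz.le
  have := mono Set.self_mem_Ici hu hu
  rwa [h0] at this

private lemma lemA : ∀ u : ℝ, 0 ≤ u → 3 * Real.sinh u ≤ u * Real.cosh u + 2 * u := by
  have h2 : ∀ u : ℝ, 0 ≤ u → 0 ≤ u * Real.cosh u - Real.sinh u := by
    apply nonneg_of_deriv _ (fun u => u * Real.sinh u)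
    · intro u
      have h := ((hasDerivAt_id u).mul (Real.hasDerivAt_cosh u)).sub (Real.hasDerivAt_sinh u)
      refine h.congr_deriv ?_
      simp only [id_eq]; ring
    · simp
    · intro u hu; exact mul_nonneg hu (Real.sinh_nonneg_iff.2 hu)
  have h1 : ∀ u : ℝ, 0 ≤ u → 0 ≤ u * Real.sinh u + 2 - 2 * Real.cosh u := by
    apply nonneg_of_deriv _ (fun u => u * Real.cosh u - Real.sinh u)
    · intro u
      have h := (((hasDerivAt_id u).mul (Real.hasDerivAt_sinh u)).add_const 2).sub
        ((Real.hasDerivAt_cosh u).const_mul 2)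
      refine h.congr_deriv ?_
      simp only [id_eq]; ring
    · simp
    · exact h2
  have h0 : ∀ u : ℝ, 0 ≤ u → 0 ≤ u * Real.cosh u + 2 * u - 3 * Real.sinh u := by
    apply nonneg_of_deriv _ (fun u => u * Real.sinh u + 2 - 2 * Real.cosh u)
    · intro u
      have h := (((hasDerivAt_id u).mul (Real.hasDerivAt_cosh u)).add
        ((hasDerivAt_id u).const_mul 2)).sub ((Real.hasDerivAt_sinh u).const_mul 3)
      refine h.congr_deriv ?_
      simp only [id_eq]; ring
    · simp
    · exact h1
  intro u hu; linarith [h0 u hu]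

private lemma lemB : ∀ u : ℝ, 0 ≤ u →
    27 * u * Real.cosh u + 54 * u ≤ 2 * u ^ 3 * (Real.cosh u - 1) + 81 * Real.sinh u := by
  have h2 : ∀ u : ℝ, 0 ≤ u →
      0 ≤ 2 * u ^ 3 * Real.cosh u + 12 * u ^ 2 * Real.sinh u - 15 * u * Real.cosh u
        - 12 * u + 27 * Real.sinh u := by
    apply nonneg_of_deriv _ (fun u => 2 * u ^ 3 * Real.sinh u + 18 * u ^ 2 * Real.cosh u
      + 9 * u * Real.sinh u + 12 * Real.cosh u - 12)
    · intro u
      have h := (((((((hasDerivAt_pow 3 u).const_mul 2).mul (Real.hasDerivAt_cosh u)).add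
        (((hasDerivAt_pow 2 u).const_mul 12).mul (Real.hasDerivAt_sinh u))).sub
        (((hasDerivAt_id u).const_mul 15).mul (Real.hasDerivAt_cosh u))).sub
        ((hasDerivAt_id u).const_mul 12)).add ((Real.hasDerivAt_sinh u).const_mul 27))
      refine h.congr_deriv ?_
      simp only [id_eq]; push_cast; ring
    · simp
    · intro u hu
      have hs := Real.sinh_nonneg_iff.2 hu
      have hc := Real.one_le_cosh u
      nlinarith [mul_nonneg (pow_nonneg hu 3) hs,
        mul_nonneg (pow_nonneg hu 2) (by linarith : (0:ℝ) ≤ Real.cosh u),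
        mul_nonneg hu hs]
  have h1 : ∀ u : ℝ, 0 ≤ u →
      0 ≤ 6 * u ^ 2 * Real.cosh u - 6 * u ^ 2 + 2 * u ^ 3 * Real.sinh u + 54 * Real.cosh u
        - 27 * u * Real.sinh u - 54 := by
    apply nonneg_of_deriv _ (fun u => 2 * u ^ 3 * Real.cosh u + 12 * u ^ 2 * Real.sinh u
      - 15 * u * Real.cosh u - 12 * u + 27 * Real.sinh u)
    · intro u
      have h := (((((((hasDerivAt_pow 2 u).const_mul 6).mul (Real.hasDerivAt_cosh u)).sub
        ((hasDerivAt_pow 2 u).const_mul 6)).add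
        (((hasDerivAt_pow 3 u).const_mul 2).mul (Real.hasDerivAt_sinh u))).add
        ((Real.hasDerivAt_cosh u).const_mul 54)).sub
        (((hasDerivAt_id u).const_mul 27).mul (Real.hasDerivAt_sinh u))).sub_const 54
      refine h.congr_deriv ?_
      simp only [id_eq]; push_cast; ring
    · simp
    · exact h2
  have h0 : ∀ u : ℝ, 0 ≤ u →
      0 ≤ 2 * u ^ 3 * (Real.cosh u - 1) + 81 * Real.sinh u - 27 * u * Real.cosh u - 54 * u := by
    apply nonneg_of_deriv _ (fun u => 6 * u ^ 2 * Real.cosh u - 6 * u ^ 2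
      + 2 * u ^ 3 * Real.sinh u + 54 * Real.cosh u - 27 * u * Real.sinh u - 54)
    · intro u
      have h := (((((hasDerivAt_pow 3 u).const_mul 2).mul
        ((Real.hasDerivAt_cosh u).sub_const 1)).add
        ((Real.hasDerivAt_sinh u).const_mul 81)).sub
        (((hasDerivAt_id u).const_mul 27).mul (Real.hasDerivAt_cosh u))).sub
        ((hasDerivAt_id u).const_mul 54)
      refine h.congr_deriv ?_
      simp only [id_eq]; push_cast; ring
    · norm_num
    · exact h1
  intro u hu; linarith [h0 u hu]

private lemma pt_upper {t : ℝ} (ht : 0 < t) :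
    (Real.cosh t / Real.sinh t) / t ≤ 2 / 3 + 1 / Real.sinh t ^ 2 := by
  have hs : 0 < Real.sinh t := Real.sinh_pos_iff.2 ht
  have key := lemA (2 * t) (by linarith)
  rw [Real.sinh_two_mul, Real.cosh_two_mul] at key
  have hc2 : Real.cosh t ^ 2 = Real.sinh t ^ 2 + 1 := Real.cosh_sq t
  have e1 : t * Real.cosh t ^ 2 = t * Real.sinh t ^ 2 + t := by rw [hc2]; ring
  have key2 : 6 * Real.sinh t * Real.cosh t ≤ 4 * t * Real.sinh t ^ 2 + 6 * t := by
    nlinarith [key, e1]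
  have hrhs : 2 / 3 + 1 / Real.sinh t ^ 2 = (2 * Real.sinh t ^ 2 + 3) / (3 * Real.sinh t ^ 2) := by
    field_simp
  rw [div_div, hrhs, div_le_div_iff₀ (by positivity) (by positivity)]
  nlinarith [mul_le_mul_of_nonneg_left key2 hs.le]

private lemma pt_lower {t : ℝ} (ht : 0 < t) :
    2 / 3 + 1 / Real.sinh t ^ 2 - 16 / 81 * t ^ 2 ≤ (Real.cosh t / Real.sinh t) / t := by
  have hs : 0 < Real.sinh t := Real.sinh_pos_iff.2 ht
  have key := lemB (2 * t) (by linarith)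
  rw [Real.sinh_two_mul, Real.cosh_two_mul] at key
  have hc2 : Real.cosh t ^ 2 = Real.sinh t ^ 2 + 1 := Real.cosh_sq t
  have e1 : t * Real.cosh t ^ 2 = t * Real.sinh t ^ 2 + t := by rw [hc2]; ring
  have e3 : t ^ 3 * Real.cosh t ^ 2 = t ^ 3 * Real.sinh t ^ 2 + t ^ 3 := by rw [hc2]; ring
  have key2 : 108 * t * Real.sinh t ^ 2 + 162 * t
      ≤ 32 * t ^ 3 * Real.sinh t ^ 2 + 162 * Real.sinh t * Real.cosh t := by
    nlinarith [key, e1, e3]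
  have hlhs : 2 / 3 + 1 / Real.sinh t ^ 2 - 16 / 81 * t ^ 2
      = (54 * Real.sinh t ^ 2 + 81 - 16 * t ^ 2 * Real.sinh t ^ 2) / (81 * Real.sinh t ^ 2) := by
    field_simp; ring
  rw [div_div, hlhs, div_le_div_iff₀ (by positivity) (by positivity)]
  nlinarith [mul_le_mul_of_nonneg_left key2 hs.le,
    mul_nonneg (pow_nonneg ht.le 3) (pow_nonneg hs.le 3)]

theorem simpson_stmt17 (x y : ℝ) (hy : 0 < y) (hxy : y < x) :
    2 / 3 - (Real.cosh x / Real.sinh x - Real.cosh y / Real.sinh y) / (x - y) -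
          16 / 243 * (x ^ 2 + x * y + y ^ 2) ≤
        (1 / (x - y)) * ∫ t in y..x, (Real.cosh t / Real.sinh t) / t ∧
      (1 / (x - y)) * ∫ t in y..x, (Real.cosh t / Real.sinh t) / t ≤
        2 / 3 - (Real.cosh x / Real.sinh x - Real.cosh y / Real.sinh y) / (x - y) := by
  have hyx : y ≤ x := hxy.le
  have hsub : Set.uIcc y x = Set.Icc y x := Set.uIcc_of_le hyx
  have hpos : ∀ t ∈ Set.Icc y x, 0 < t := fun t ht => lt_of_lt_of_le hy ht.1
  have hspos : ∀ t ∈ Set.Icc y x, 0 < Real.sinh t := fun t ht => Real.sinh_pos_iff.2 (hpos t ht)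
  have hcf : ContinuousOn (fun t => (Real.cosh t / Real.sinh t) / t) (Set.Icc y x) :=
    (Real.continuous_cosh.continuousOn.div Real.continuous_sinh.continuousOn
      (fun t ht => (hspos t ht).ne')).div continuousOn_id (fun t ht => (hpos t ht).ne')
  have hcg : ContinuousOn (fun t : ℝ => 2 / 3 + 1 / Real.sinh t ^ 2) (Set.Icc y x) :=
    continuousOn_const.add (continuousOn_const.div
      (Real.continuous_sinh.continuousOn.pow 2)
      (fun t ht => pow_ne_zero _ (hspos t ht).ne'))
  have hif : IntervalIntegrable (fun t => (Real.cosh t / Real.sinh t) / t)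
      MeasureTheory.volume y x := (hsub ▸ hcf).intervalIntegrable
  have hig : IntervalIntegrable (fun t : ℝ => 2 / 3 + 1 / Real.sinh t ^ 2)
      MeasureTheory.volume y x := (hsub ▸ hcg).intervalIntegrable
  have hipoly : IntervalIntegrable (fun t : ℝ => 16 / 81 * t ^ 2)
      MeasureTheory.volume y x := (continuous_const.mul (continuous_pow 2)).intervalIntegrable y x
  have hih : IntervalIntegrable (fun t : ℝ => 2 / 3 + 1 / Real.sinh t ^ 2 - 16 / 81 * t ^ 2)
      MeasureTheory.volume y x := hig.sub hipoly
  have hgval : (∫ t in y..x, (2 / 3 + 1 / Real.sinh t ^ 2))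
      = (2 / 3 * x - Real.cosh x / Real.sinh x) - (2 / 3 * y - Real.cosh y / Real.sinh y) := by
    apply intervalIntegral.integral_eq_sub_of_hasDerivAt
    · intro t ht
      rw [hsub] at ht
      have hs : 0 < Real.sinh t := hspos t ht
      have hc2 : Real.cosh t ^ 2 = Real.sinh t ^ 2 + 1 := Real.cosh_sq t
      have hd := (((hasDerivAt_id t).const_mul (2/3 : ℝ)).sub
        ((Real.hasDerivAt_cosh t).div (Real.hasDerivAt_sinh t) hs.ne'))
      refine hd.congr_deriv ?_
      rw [show Real.cosh t * Real.cosh t = Real.sinh t * Real.sinh t + 1 by nlinarith [hc2]]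
      ring
    · exact hig
  have hpolyval : (∫ t in y..x, 16 / 81 * t ^ 2) = 16 / 243 * (x ^ 3 - y ^ 3) := by
    rw [intervalIntegral.integral_const_mul, integral_pow]
    norm_num
    ring
  have hupper : (∫ t in y..x, (Real.cosh t / Real.sinh t) / t)
      ≤ (2 / 3 * x - Real.cosh x / Real.sinh x) - (2 / 3 * y - Real.cosh y / Real.sinh y) := by
    rw [← hgval]
    exact intervalIntegral.integral_mono_on hyx hif hig (fun t ht => pt_upper (hpos t ht))
  have hlower : (2 / 3 * x - Real.cosh x / Real.sinh x) - (2 / 3 * y - Real.cosh y / Real.sinh y)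
      - 16 / 243 * (x ^ 3 - y ^ 3) ≤ ∫ t in y..x, (Real.cosh t / Real.sinh t) / t := by
    have h := intervalIntegral.integral_mono_on hyx hih hif (fun t ht => pt_lower (hpos t ht))
    rwa [intervalIntegral.integral_sub hig hipoly, hgval, hpolyval] at h
  have hxy' : 0 < x - y := by linarith
  constructor
  · have h := mul_le_mul_of_nonneg_left hlower (le_of_lt (by positivity : (0:ℝ) < 1 / (x - y)))
    refine le_trans (le_of_eq ?_) h
    field_simp
    ring
  · have h := mul_le_mul_of_nonneg_left hupper (le_of_lt (by positivity : (0:ℝ) < 1 / (x - y)))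
    refine le_trans h (le_of_eq ?_)
    field_simp
    ring
end

section
/- For the function φ(x) = |x|³/6 on the interval [-x₀, x₀] with x₀ > 0 (i.e., φ(t) = t³/6 for t ≥ 0 and φ(t) = -t³/6 for t ≤ 0), φ is C² with m₂ = 0, M₂ = x₀ on [-x₀,x₀], and |T_φ(-x₀,x₀)| = (1/288)(M₂ - m₂)(2x₀)². Hence any constant A with |T_φ(a,b)| ≤ A(M₂-m₂)(b-a)² valid for all C² functions satisfies A ≥ 1/288. -/
open intervalIntegral Set

lemma abs_cube_deriv (x : ℝ) :
    HasDerivAt (fun x : ℝ => |x| ^ 3 / 6) (x * |x| / 2) x := by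
  rcases lt_trichotomy x 0 with h | h | h
  · have h0 : HasDerivAt (fun x : ℝ => -x ^ 3 / 6) (x * |x| / 2) x := by
      have := ((hasDerivAt_pow 3 x).neg.div_const 6)
      refine this.congr_deriv ?_
      rw [abs_of_neg h]; ring
    refine h0.congr_of_eventuallyEq ?_
    filter_upwards [eventually_lt_nhds h] with y hy
    rw [abs_of_neg hy]; ring
  · rw [h, show (0:ℝ) * |(0:ℝ)| / 2 = 0 by simp, hasDerivAt_iff_tendsto_slope]
    apply squeeze_zero_norm (a := fun y : ℝ => y ^ 2 / 6)
    · intro y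
      rcases eq_or_ne y 0 with rfl | hy
      · simp [slope]
      · have hs : slope (fun x : ℝ => |x| ^ 3 / 6) 0 y = |y| ^ 3 / 6 / y := by
          simp [slope]; ring
        rw [Real.norm_eq_abs, hs]
        refine le_of_eq ?_
        rw [abs_div, abs_div, abs_pow, abs_abs, show |(6:ℝ)| = 6 by norm_num]
        have h3 : |y| ^ 3 = y ^ 2 * |y| := by
          rw [pow_succ, sq_abs]
        rw [h3]
        field_simp [abs_ne_zero.mpr hy]
    · have hc : Continuous (fun y : ℝ => y ^ 2 / 6) := by continuity
      simpa using (hc.tendsto 0).mono_left nhdsWithin_le_nhds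
  · have h0 : HasDerivAt (fun x : ℝ => x ^ 3 / 6) (x * |x| / 2) x := by
      have := ((hasDerivAt_pow 3 x).div_const 6)
      refine this.congr_deriv ?_
      rw [abs_of_pos h]; ring
    refine h0.congr_of_eventuallyEq ?_
    filter_upwards [eventually_gt_nhds h] with y hy
    rw [abs_of_pos hy]

lemma abs_cube_deriv2 (x : ℝ) :
    HasDerivAt (fun x : ℝ => x * |x| / 2) |x| x := by
  rcases lt_trichotomy x 0 with h | h | h
  · have h0 : HasDerivAt (fun x : ℝ => -x ^ 2 / 2) |x| x := by
      have := ((hasDerivAt_pow 2 x).neg.div_const 2)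
      refine this.congr_deriv ?_
      rw [abs_of_neg h]; ring
    refine h0.congr_of_eventuallyEq ?_
    filter_upwards [eventually_lt_nhds h] with y hy
    rw [abs_of_neg hy]; ring
  · rw [h, show |(0:ℝ)| = 0 by simp, hasDerivAt_iff_tendsto_slope]
    apply squeeze_zero_norm (a := fun y : ℝ => |y| / 2)
    · intro y
      rcases eq_or_ne y 0 with rfl | hy
      · simp [slope]
      · have hs : slope (fun x : ℝ => x * |x| / 2) 0 y = y * |y| / 2 / y := by
          simp [slope]; ring
        rw [Real.norm_eq_abs, hs]
        refine le_of_eq ?_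
        rw [abs_div, abs_div, abs_mul, abs_abs, show |(2:ℝ)| = 2 by norm_num]
        field_simp [abs_ne_zero.mpr hy]
    · have hc : Continuous (fun y : ℝ => |y| / 2) := by continuity
      simpa using (hc.tendsto 0).mono_left nhdsWithin_le_nhds
  · have h0 : HasDerivAt (fun x : ℝ => x ^ 2 / 2) |x| x := by
      have := ((hasDerivAt_pow 2 x).div_const 2)
      refine this.congr_deriv ?_
      rw [abs_of_pos h]; ring
    refine h0.congr_of_eventuallyEq ?_
    filter_upwards [eventually_gt_nhds h] with y hy
    rw [abs_of_pos hy]; ring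

lemma abs_cube_deriv_eq :
    deriv (fun x : ℝ => |x| ^ 3 / 6) = fun x => x * |x| / 2 :=
  funext fun x => (abs_cube_deriv x).deriv

lemma abs_cube_contDiff : ContDiff ℝ 2 (fun x : ℝ => |x| ^ 3 / 6) := by
  rw [show (2 : WithTop ℕ∞) = 1 + 1 from rfl, contDiff_succ_iff_deriv]
  refine ⟨fun x => (abs_cube_deriv x).differentiableAt, by simp, ?_⟩
  rw [abs_cube_deriv_eq, contDiff_one_iff_deriv]
  refine ⟨fun x => (abs_cube_deriv2 x).differentiableAt, ?_⟩
  have h : deriv (fun x : ℝ => x * |x| / 2) = fun x => |x| :=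
    funext fun x => (abs_cube_deriv2 x).deriv
  rw [h]; exact continuous_abs

lemma abs_cube_iteratedDeriv (x : ℝ) :
    iteratedDeriv 2 (fun x : ℝ => |x| ^ 3 / 6) x = |x| := by
  rw [show (2 : ℕ) = 1 + 1 from rfl, iteratedDeriv_succ, iteratedDeriv_one,
    abs_cube_deriv_eq]
  exact (abs_cube_deriv2 x).deriv

theorem simpson_stmt19 (x₀ : ℝ) (hx₀ : 0 < x₀) :
    ContDiff ℝ 2 (fun x : ℝ => |x| ^ 3 / 6) ∧
      (∀ x ∈ Set.Icc (-x₀) x₀,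
        0 ≤ iteratedDeriv 2 (fun x : ℝ => |x| ^ 3 / 6) x ∧
          iteratedDeriv 2 (fun x : ℝ => |x| ^ 3 / 6) x ≤ x₀) ∧
      |((|(-x₀ : ℝ)| ^ 3 / 6 + |x₀| ^ 3 / 6) / 6 + 2 / 3 * (|(0 : ℝ)| ^ 3 / 6) -
          (1 / (x₀ - -x₀)) * ∫ t in (-x₀)..x₀, |t| ^ 3 / 6)| =
        1 / 288 * (x₀ - 0) * (x₀ - -x₀) ^ 2 ∧
      ∀ A : ℝ,
        (∀ (a b : ℝ), a < b → ∀ φ : ℝ → ℝ, ContDiff ℝ 2 φ →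
          ∀ m₂ M₂ : ℝ,
            (∀ x ∈ Set.Icc a b, m₂ ≤ iteratedDeriv 2 φ x ∧ iteratedDeriv 2 φ x ≤ M₂) →
            |(φ a + φ b) / 6 + 2 / 3 * φ ((a + b) / 2) - (1 / (b - a)) * ∫ t in a..b, φ t| ≤
              A * (M₂ - m₂) * (b - a) ^ 2) →
        A ≥ 1 / 288 := by
  have hbound : ∀ x ∈ Set.Icc (-x₀) x₀,
      0 ≤ iteratedDeriv 2 (fun x : ℝ => |x| ^ 3 / 6) x ∧
        iteratedDeriv 2 (fun x : ℝ => |x| ^ 3 / 6) x ≤ x₀ := by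
    intro x hx
    rw [abs_cube_iteratedDeriv]
    exact ⟨abs_nonneg x, abs_le.mpr ⟨hx.1, hx.2⟩⟩
  have hcont : Continuous (fun t : ℝ => |t| ^ 3 / 6) := by continuity
  have hInt : (∫ t in (-x₀)..x₀, |t| ^ 3 / 6) = x₀ ^ 4 / 12 := by
    have h1 : (∫ t in (0:ℝ)..x₀, |t| ^ 3 / 6) = x₀ ^ 4 / 24 := by
      rw [intervalIntegral.integral_congr (g := fun t => t ^ 3 / 6)
        (fun t ht => by
          rw [Set.uIcc_of_le hx₀.le] at ht
          simp [abs_of_nonneg ht.1])]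
      rw [intervalIntegral.integral_div, integral_pow]
      ring
    have h2 : (∫ t in (-x₀)..(0:ℝ), |t| ^ 3 / 6) = x₀ ^ 4 / 24 := by
      rw [intervalIntegral.integral_congr (g := fun t => -(t ^ 3) / 6)
        (fun t ht => by
          rw [Set.uIcc_of_le (by linarith : -x₀ ≤ (0:ℝ))] at ht
          rw [abs_of_nonpos ht.2]; ring)]
      rw [intervalIntegral.integral_div, intervalIntegral.integral_neg, integral_pow]
      ring
    have hadd := intervalIntegral.integral_add_adjacent_intervals
      (a := -x₀) (b := 0) (c := x₀) (f := fun t : ℝ => |t| ^ 3 / 6)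
      (μ := MeasureTheory.volume)
      (hcont.intervalIntegrable _ _) (hcont.intervalIntegrable _ _)
    rw [← hadd, h1, h2]; ring
  have hT : |((|(-x₀ : ℝ)| ^ 3 / 6 + |x₀| ^ 3 / 6) / 6 + 2 / 3 * (|(0 : ℝ)| ^ 3 / 6) -
      (1 / (x₀ - -x₀)) * ∫ t in (-x₀)..x₀, |t| ^ 3 / 6)| =
      1 / 288 * (x₀ - 0) * (x₀ - -x₀) ^ 2 := by
    have hne : x₀ - -x₀ ≠ 0 := ne_of_gt (by linarith)
    have key : (x₀ ^ 3 / 6 + x₀ ^ 3 / 6) / 6 + 2 / 3 * ((0:ℝ) ^ 3 / 6) -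
        1 / (x₀ - -x₀) * (x₀ ^ 4 / 12) = x₀ ^ 3 / 72 := by
      field_simp
      ring
    rw [hInt]
    simp only [abs_neg, abs_of_pos hx₀, abs_zero]
    rw [key, abs_of_pos (by positivity)]
    ring
  refine ⟨abs_cube_contDiff, hbound, hT, ?_⟩
  intro A hA
  have h := hA (-x₀) x₀ (by linarith) (fun x : ℝ => |x| ^ 3 / 6) abs_cube_contDiff 0 x₀ hbound
  have hmid : ((-x₀ + x₀) / 2 : ℝ) = 0 := by ring
  rw [hmid, hT] at h
  nlinarith [pow_pos hx₀ 3, sq_nonneg x₀]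
end
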